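/- Let A be a complex Banach algebra possessing a contractive approximate identity, and let H be a Hilbert A-module, with representation π_H : A → B(H), which is a generator for the category of Hilbert A-modules. Then the double commutant π_H(A)'' equals the closure of π_H(A) in the weak operator topology on B(H). -/

import Mathlib

noncomputable section

open Filter

open scoped ENNReal

/-- A contractive approximate identity for a (possibly non-unital) normed algebra `A`:
a net `(e i)`, indexed by a nontrivial filter, with `‖e i‖ ≤ 1` for all `i`, such that
`e i * a → a` and `a * e i → a` in norm for every `a ∈ A`. -/
def HasCAI (A : Type) [NonUnitalNormedRing A] : Prop :=
  ∃ (ι : Type) (l : Filter ι) (e : ι → A), l.NeBot ∧ (∀ i, ‖e i‖ ≤ 1) ∧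
    ∀ a : A, Tendsto (fun i => e i * a) l (nhds a) ∧ Tendsto (fun i => a * e i) l (nhds a)

variable (A : Type) [NonUnitalNormedRing A] [NormedSpace ℂ A] [IsScalarTower ℂ A A]
  [SMulCommClass ℂ A A]

/-- A Hilbert `A`-module structure on the Hilbert space `K`: a contractive algebra
homomorphism `π : A → B(K)` which is nondegenerate, i.e. the linear span of
`{π a x : a ∈ A, x ∈ K}` is dense in `K`. -/
def IsHilbertRep {K : Type} [NormedAddCommGroup K] [InnerProductSpace ℂ K] [CompleteSpace K]
    (π : A →ₙₐ[ℂ] (K →L[ℂ] K)) : Prop :=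
  (∀ a : A, ‖π a‖ ≤ ‖a‖) ∧
  Dense ((Submodule.span ℂ {x : K | ∃ (a : A) (y : K), π a y = x} : Submodule ℂ K) : Set K)

/-- A bounded `A`-module map between Hilbert `A`-modules. -/
def IsModuleMap {K L : Type} [NormedAddCommGroup K] [InnerProductSpace ℂ K]
    [NormedAddCommGroup L] [InnerProductSpace ℂ L]
    (πK : A →ₙₐ[ℂ] (K →L[ℂ] K)) (πL : A →ₙₐ[ℂ] (L →L[ℂ] L)) (T : K →L[ℂ] L) : Prop :=
  ∀ (a : A) (x : K), T (πK a x) = πL a (T x)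

/-- `H` is a generator for the category of Hilbert `A`-modules: for all Hilbert
`A`-modules `K`, `L` and every nonzero bounded `A`-module map `R : K → L` there is a
bounded `A`-module map `V : H → K` with `R ∘ V ≠ 0`. -/
def IsGenerator {H : Type} [NormedAddCommGroup H] [InnerProductSpace ℂ H] [CompleteSpace H]
    (πH : A →ₙₐ[ℂ] (H →L[ℂ] H)) : Prop :=
  ∀ (K L : Type) [NormedAddCommGroup K] [InnerProductSpace ℂ K] [CompleteSpace K]
    [NormedAddCommGroup L] [InnerProductSpace ℂ L] [CompleteSpace L],
    ∀ (πK : A →ₙₐ[ℂ] (K →L[ℂ] K)) (πL : A →ₙₐ[ℂ] (L →L[ℂ] L)),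
      IsHilbertRep A πK → IsHilbertRep A πL →
      ∀ R : K →L[ℂ] L, IsModuleMap A πK πL R → R ≠ 0 →
        ∃ V : H →L[ℂ] K, IsModuleMap A πH πK V ∧ R.comp V ≠ 0

/-- The closure of a set of operators in the weak operator topology on `B(K)`. -/
def wotClosure {K : Type} [NormedAddCommGroup K] [InnerProductSpace ℂ K]
    (S : Set (K →L[ℂ] K)) : Set (K →L[ℂ] K) :=
  (ContinuousLinearMapWOT.ofCLM : (K →L[ℂ] K) → (K →WOT[ℂ] K)) ⁻¹'
    closure (ContinuousLinearMapWOT.ofCLM '' S)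

section DCTAux

open Topology

variable {A}
variable {H : Type} [NormedAddCommGroup H] [InnerProductSpace ℂ H] [CompleteSpace H]

instance piLp_completeSpace {n : Type} {β : n → Type} [∀ i, NormedAddCommGroup (β i)]
    [∀ i, CompleteSpace (β i)] : CompleteSpace (PiLp 2 β) :=
  inferInstance

/-- Extensionality for `PiLp`. -/
lemma piLp_ext {n : Type} {β : n → Type} [∀ i, NormedAddCommGroup (β i)]
    {x y : PiLp 2 β} (h : ∀ j, x j = y j) : x = y := PiLp.ext h

/-- Norm of a component is at most the `L²` norm. -/
lemma piLp_norm_apply_le {n : Type} [Fintype n] {β : n → Type}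
    [∀ i, NormedAddCommGroup (β i)] (z : PiLp 2 β) (j : n) : ‖z j‖ ≤ ‖z‖ := by
  rw [PiLp.norm_eq_of_L2]
  rw [show ‖z j‖ = Real.sqrt (‖z j‖ ^ 2) from (Real.sqrt_sq (norm_nonneg _)).symm]
  exact Real.sqrt_le_sqrt (Finset.single_le_sum (f := fun i => ‖z i‖ ^ 2)
    (fun i _ => sq_nonneg _) (Finset.mem_univ j))

/-- The diagonal amplification of an operator to `H^n` (with the `L²` norm). -/
def ampCLM {n : Type} [Fintype n] (T : H →L[ℂ] H) :
    PiLp 2 (fun _ : n => H) →L[ℂ] PiLp 2 (fun _ : n => H) :=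
  LinearMap.mkContinuous
    { toFun := fun z => (WithLp.toLp 2 (fun j => T (z j)) : PiLp 2 (fun _ : n => H))
      map_add' := fun z w => PiLp.ext fun j => map_add T _ _
      map_smul' := fun c z => PiLp.ext fun j => map_smul T c _ }
    ‖T‖ (fun z => by
      rw [PiLp.norm_eq_of_L2, PiLp.norm_eq_of_L2]
      have h1 : ∀ j : n, ‖T (z j)‖ ^ 2 ≤ ‖T‖ ^ 2 * ‖z j‖ ^ 2 := fun j => by
        rw [← mul_pow]
        exact pow_le_pow_left₀ (norm_nonneg _) (T.le_opNorm _) 2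
      calc Real.sqrt (∑ j, ‖T (z j)‖ ^ 2)
          ≤ Real.sqrt (∑ j, ‖T‖ ^ 2 * ‖z j‖ ^ 2) :=
            Real.sqrt_le_sqrt (Finset.sum_le_sum fun j _ => h1 j)
        _ = ‖T‖ * Real.sqrt (∑ j, ‖z j‖ ^ 2) := by
            rw [← Finset.mul_sum, Real.sqrt_mul (sq_nonneg _), Real.sqrt_sq (norm_nonneg _)])

@[simp] lemma ampCLM_apply {n : Type} [Fintype n] (T : H →L[ℂ] H)
    (z : PiLp 2 (fun _ : n => H)) (j : n) : ampCLM T z j = T (z j) := rfl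

lemma ampCLM_norm_le {n : Type} [Fintype n] (T : H →L[ℂ] H) :
    ‖(ampCLM T : PiLp 2 (fun _ : n => H) →L[ℂ] PiLp 2 (fun _ : n => H))‖ ≤ ‖T‖ :=
  LinearMap.mkContinuous_norm_le _ (norm_nonneg T) _

/-- The diagonal amplification of a representation to `H^n`. -/
def ampRep (πH : A →ₙₐ[ℂ] (H →L[ℂ] H)) (n : Type) [Fintype n] :
    A →ₙₐ[ℂ] (PiLp 2 (fun _ : n => H) →L[ℂ] PiLp 2 (fun _ : n => H)) where
  toFun a := ampCLM (πH a)
  map_smul' c a := by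
    ext z i
    show πH (c • a) (z i) = ((MonoidHom.id ℂ) c • ampCLM (πH a)) z i
    rw [map_smul]
    rfl
  map_zero' := by
    ext z i
    show πH 0 (z i) = (0 : PiLp 2 (fun _ : n => H) →L[ℂ] PiLp 2 (fun _ : n => H)) z i
    rw [map_zero]
    rfl
  map_add' a b := by
    ext z i
    show πH (a + b) (z i) = ((ampCLM (πH a) + ampCLM (πH b) :
      PiLp 2 (fun _ : n => H) →L[ℂ] PiLp 2 (fun _ : n => H))) z i
    rw [map_add]
    rfl
  map_mul' a b := by
    ext z i
    show πH (a * b) (z i) = ((ampCLM (πH a) * ampCLM (πH b) :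
      PiLp 2 (fun _ : n => H) →L[ℂ] PiLp 2 (fun _ : n => H))) z i
    rw [map_mul]
    rfl

@[simp] lemma ampRep_apply (πH : A →ₙₐ[ℂ] (H →L[ℂ] H)) {n : Type} [Fintype n] (a : A)
    (z : PiLp 2 (fun _ : n => H)) (j : n) : ampRep πH n a z j = πH a (z j) := rfl

/-- Restriction of a representation to an invariant submodule. -/
def subRep {K : Type} [NormedAddCommGroup K] [InnerProductSpace ℂ K]
    (π : A →ₙₐ[ℂ] (K →L[ℂ] K)) (S : Submodule ℂ K)
    (hinv : ∀ (a : A) (x : K), x ∈ S → π a x ∈ S) :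
    A →ₙₐ[ℂ] (↥S →L[ℂ] ↥S) where
  toFun a := ((π a).comp S.subtypeL).codRestrict S (fun x => hinv a x x.2)
  map_smul' c a := by
    refine ContinuousLinearMap.ext fun x => Subtype.ext ?_
    show π (c • a) ↑x = (((MonoidHom.id ℂ) c • π a : K →L[ℂ] K)) ↑x
    rw [map_smul]; rfl
  map_zero' := by
    refine ContinuousLinearMap.ext fun x => Subtype.ext ?_
    show π 0 ↑x = (0 : K)
    rw [map_zero]; rfl
  map_add' a b := by
    refine ContinuousLinearMap.ext fun x => Subtype.ext ?_
    show π (a + b) ↑x = ((π a + π b : K →L[ℂ] K)) ↑x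
    rw [map_add]
  map_mul' a b := by
    refine ContinuousLinearMap.ext fun x => Subtype.ext ?_
    show π (a * b) ↑x = π a (π b ↑x)
    rw [map_mul]; rfl

@[simp] lemma subRep_apply_coe {K : Type} [NormedAddCommGroup K] [InnerProductSpace ℂ K]
    (π : A →ₙₐ[ℂ] (K →L[ℂ] K)) (S : Submodule ℂ K)
    (hinv : ∀ (a : A) (x : K), x ∈ S → π a x ∈ S) (a : A) (x : ↥S) :
    (↑(subRep π S hinv a x) : K) = π a ↑x := rfl

/-- Compression of a representation to the orthogonal complement of an invariant
closed submodule. -/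
def compRep {K : Type} [NormedAddCommGroup K] [InnerProductSpace ℂ K] [CompleteSpace K]
    (π : A →ₙₐ[ℂ] (K →L[ℂ] K)) (S : Submodule ℂ K) [S.HasOrthogonalProjection]
    (hinv : ∀ (a : A) (x : K), x ∈ S → π a x ∈ S) :
    A →ₙₐ[ℂ] (↥Sᗮ →L[ℂ] ↥Sᗮ) where
  toFun a := (Submodule.orthogonalProjectionOnto Sᗮ).comp ((π a).comp Sᗮ.subtypeL)
  map_smul' c a := by
    refine ContinuousLinearMap.ext fun x => ?_
    show Submodule.orthogonalProjectionOnto Sᗮ (π (c • a) ↑x)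
      = ((MonoidHom.id ℂ) c • ((Submodule.orthogonalProjectionOnto Sᗮ).comp ((π a).comp Sᗮ.subtypeL))) x
    rw [map_smul]
    show Submodule.orthogonalProjectionOnto Sᗮ ((c • π a : K →L[ℂ] K) ↑x)
      = c • Submodule.orthogonalProjectionOnto Sᗮ (π a ↑x)
    rw [ContinuousLinearMap.smul_apply, map_smul]
  map_zero' := by
    refine ContinuousLinearMap.ext fun x => ?_
    show Submodule.orthogonalProjectionOnto Sᗮ (π 0 ↑x) = 0
    rw [map_zero]
    show Submodule.orthogonalProjectionOnto Sᗮ ((0 : K →L[ℂ] K) ↑x) = 0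
    rw [ContinuousLinearMap.zero_apply, map_zero]
  map_add' a b := by
    refine ContinuousLinearMap.ext fun x => ?_
    show Submodule.orthogonalProjectionOnto Sᗮ (π (a + b) ↑x)
      = Submodule.orthogonalProjectionOnto Sᗮ (π a ↑x) + Submodule.orthogonalProjectionOnto Sᗮ (π b ↑x)
    rw [map_add, ContinuousLinearMap.add_apply, map_add]
  map_mul' a b := by
    refine ContinuousLinearMap.ext fun x => ?_
    have hx : (↑(Submodule.orthogonalProjectionOnto S (π b ↑x)) : K) + ↑(Submodule.orthogonalProjectionOnto Sᗮ (π b ↑x)) = π b ↑x :=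
        S.starProjection_add_starProjection_orthogonal (π b ↑x)
    have h0 : Submodule.orthogonalProjectionOnto Sᗮ
        (π a ↑(Submodule.orthogonalProjectionOnto S (π b ↑x))) = 0 :=
      Submodule.orthogonalProjectionOnto_apply_of_mem_orthogonal
        (S.le_orthogonal_orthogonal (hinv a _ (SetLike.coe_mem _)))
    show Submodule.orthogonalProjectionOnto Sᗮ (π (a * b) ↑x)
      = Submodule.orthogonalProjectionOnto Sᗮ (π a ↑(Submodule.orthogonalProjectionOnto Sᗮ (π b ↑x)))
    have hsplit : π a (π b ↑x) = π a ↑(Submodule.orthogonalProjectionOnto S (π b ↑x))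
        + π a ↑(Submodule.orthogonalProjectionOnto Sᗮ (π b ↑x)) := by
      rw [← map_add, hx]
    rw [map_mul, ContinuousLinearMap.mul_apply, hsplit, map_add, h0, zero_add]

@[simp] lemma compRep_apply {K : Type} [NormedAddCommGroup K] [InnerProductSpace ℂ K]
    [CompleteSpace K] (π : A →ₙₐ[ℂ] (K →L[ℂ] K)) (S : Submodule ℂ K)
    [S.HasOrthogonalProjection]
    (hinv : ∀ (a : A) (x : K), x ∈ S → π a x ∈ S) (a : A) (x : ↥Sᗮ) :
    compRep π S hinv a x = Submodule.orthogonalProjectionOnto Sᗮ (π a ↑x) := rfl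

/-- Two vectors agreeing on all continuous functionals are equal. -/
lemma eq_of_forall_dual {E : Type} [NormedAddCommGroup E] [NormedSpace ℂ E] {v w : E}
    (h : ∀ g : E →L[ℂ] ℂ, g v = g w) : v = w := by
  by_contra hne
  obtain ⟨g, -, hg⟩ := exists_dual_vector ℂ (v - w) (norm_ne_zero_iff.2 (sub_ne_zero.2 hne))
  rw [map_sub, h g, sub_self] at hg
  have : ‖v - w‖ = 0 := Complex.ofReal_eq_zero.mp hg.symm
  exact hne (sub_eq_zero.1 (norm_eq_zero.1 this))

/-- A contractive approximate identity acts as an approximate identity in any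
Hilbert representation. -/
lemma cai_tendsto_rep {ι : Type} {l : Filter ι} {e : ι → A}
    (hnorm : ∀ i, ‖e i‖ ≤ 1) (hcai : ∀ a : A, Tendsto (fun i => e i * a) l (𝓝 a))
    {K : Type} [NormedAddCommGroup K] [InnerProductSpace ℂ K] [CompleteSpace K]
    (π : A →ₙₐ[ℂ] (K →L[ℂ] K)) (hπ : IsHilbertRep A π) (z : K) :
    Tendsto (fun i => π (e i) z) l (𝓝 z) := by
  have hgen : ∀ w ∈ Submodule.span ℂ {x : K | ∃ (a : A) (y : K), π a y = x},
      Tendsto (fun i => π (e i) w) l (𝓝 w) := by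
    intro w hw
    induction hw using Submodule.span_induction with
    | mem x hx =>
      obtain ⟨a, y, rfl⟩ := hx
      have hΛ : Continuous fun b : A => π b y := by
        let Λ : A →ₗ[ℂ] K :=
          { toFun := fun b : A => π b y
            map_add' := fun b b' => by
              show π (b + b') y = π b y + π b' y
              rw [map_add]; rfl
            map_smul' := fun c b => by
              show π (c • b) y = (RingHom.id ℂ) c • π b y
              rw [map_smul]; rfl }
        exact (Λ.mkContinuous ‖y‖
          (fun b => by
            calc ‖π b y‖ ≤ ‖π b‖ * ‖y‖ := (π b).le_opNorm y
              _ ≤ ‖b‖ * ‖y‖ := by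
                  exact mul_le_mul_of_nonneg_right (hπ.1 b) (norm_nonneg y)
              _ = ‖y‖ * ‖b‖ := mul_comm _ _)).continuous
      have h1 := (hΛ.tendsto a).comp (hcai a)
      have h2 : (fun i => π (e i) (π a y)) = fun i => π (e i * a) y := by
        funext i; rw [map_mul, ContinuousLinearMap.mul_apply]
      rw [h2]
      exact h1
    | zero => simpa using tendsto_const_nhds
    | add x y hx hy ihx ihy => simpa [map_add] using ihx.add ihy
    | smul c x hx ih => simpa [map_smul] using ih.const_smul c
  rw [Metric.tendsto_nhds]
  intro ε hε
  obtain ⟨w, hwmem, hwz⟩ := hπ.2.exists_dist_lt z (show (0:ℝ) < ε/3 by linarith)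
  have h3 := hgen w hwmem
  rw [Metric.tendsto_nhds] at h3
  filter_upwards [h3 (ε/3) (by linarith)] with i hi
  have hEi : dist (π (e i) z) (π (e i) w) ≤ dist z w := by
    rw [dist_eq_norm, dist_eq_norm, ← map_sub]
    calc ‖π (e i) (z - w)‖ ≤ ‖π (e i)‖ * ‖z - w‖ := (π (e i)).le_opNorm _
      _ ≤ 1 * ‖z - w‖ :=
          mul_le_mul_of_nonneg_right ((hπ.1 _).trans (hnorm i)) (norm_nonneg _)
      _ = ‖z - w‖ := one_mul _
  calc dist (π (e i) z) z
      ≤ dist (π (e i) z) (π (e i) w) + dist (π (e i) w) w + dist w z :=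
        dist_triangle4 _ _ _ _
    _ ≤ dist z w + dist (π (e i) w) w + dist w z := by linarith
    _ < ε/3 + ε/3 + ε/3 := by
        have := dist_comm w z
        rw [this]
        linarith
    _ = ε := by ring

/-- Nondegeneracy from the approximate identity acting as identity. -/
lemma dense_of_tendsto {ι : Type} {l : Filter ι} [hl : l.NeBot] {e : ι → A}
    {K : Type} [NormedAddCommGroup K] [InnerProductSpace ℂ K] [CompleteSpace K]
    (π : A →ₙₐ[ℂ] (K →L[ℂ] K))
    (h : ∀ z : K, Tendsto (fun i => π (e i) z) l (𝓝 z)) :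
    Dense ((Submodule.span ℂ {x : K | ∃ (a : A) (y : K), π a y = x} : Submodule ℂ K) : Set K) := by
  intro z
  exact mem_closure_of_tendsto (h z)
    (Eventually.of_forall fun i => Submodule.subset_span ⟨e i, z, rfl⟩)

/-- A module map `H → H^n` intertwines `T` and its amplification, for any `T` in the
double commutant. -/
lemma moduleMap_intertwine {πH : A →ₙₐ[ℂ] (H →L[ℂ] H)} {T : H →L[ℂ] H}
    (hT : T ∈ Set.centralizer (Set.centralizer (Set.range ⇑πH)))
    {n : Type} [Fintype n] {W : H →L[ℂ] PiLp 2 (fun _ : n => H)}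
    (hW : IsModuleMap A πH (ampRep πH n) W) (x : H) :
    ampCLM T (W x) = W (T x) := by
  refine piLp_ext fun j => ?_
  have hproj : ∀ z : PiLp 2 (fun _ : n => H), ‖z j‖ ≤ 1 * ‖z‖ := fun z => by
    rw [one_mul]; exact piLp_norm_apply_le z j
  let Wj0 : H →ₗ[ℂ] H :=
    { toFun := fun x : H => W x j
      map_add' := fun x y => by
        show W (x + y) j = W x j + W y j
        rw [map_add]; rfl
      map_smul' := fun c x => by
        show W (c • x) j = (RingHom.id ℂ) c • (W x j)
        rw [map_smul]; rfl }
  set Wj : H →L[ℂ] H := Wj0.mkContinuous ‖W‖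
    (fun x => by
      calc ‖W x j‖ ≤ ‖W x‖ := piLp_norm_apply_le _ j
        _ ≤ ‖W‖ * ‖x‖ := W.le_opNorm x) with hWj_def
  have hWj_apply : ∀ x : H, Wj x = W x j := fun _ => rfl
  have hWj : Wj ∈ Set.centralizer (Set.range ⇑πH) := by
    rw [Set.mem_centralizer_iff]
    rintro _ ⟨a, rfl⟩
    ext x'
    calc (πH a * Wj) x' = πH a (W x' j) := rfl
      _ = (ampRep πH n a (W x')) j := rfl
      _ = (W (πH a x')) j := by rw [← hW a x']
      _ = (Wj * πH a) x' := rfl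
  have h2 := hT Wj hWj
  have h3 := congrArg (fun F : H →L[ℂ] H => F x) h2
  simp only [ContinuousLinearMap.mul_apply] at h3
  -- h3 : Wj (T x) = T (Wj x)
  calc ampCLM T (W x) j = T (W x j) := rfl
    _ = T (Wj x) := rfl
    _ = Wj (T x) := h3.symm
    _ = W (T x) j := rfl

/-- **Density of ranges of module maps.** If `H` is a generator, then in any Hilbert
`A`-module `K` the span of ranges of module maps `H → K` is dense. -/
lemma generator_dense {πH : A →ₙₐ[ℂ] (H →L[ℂ] H)} (hgen : IsGenerator A πH)
    {ι : Type} {l : Filter ι} [hl : l.NeBot] {e : ι → A}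
    {K : Type} [NormedAddCommGroup K] [InnerProductSpace ℂ K] [CompleteSpace K]
    (πK : A →ₙₐ[ℂ] (K →L[ℂ] K)) (hcontr : ∀ a : A, ‖πK a‖ ≤ ‖a‖)
    (htend : ∀ z : K, Tendsto (fun i => πK (e i) z) l (𝓝 z)) :
    Dense ((Submodule.span ℂ
      {x : K | ∃ V : H →L[ℂ] K, IsModuleMap A πH πK V ∧ ∃ h, V h = x} : Submodule ℂ K) : Set K) := by
  set S0 := {x : K | ∃ V : H →L[ℂ] K, IsModuleMap A πH πK V ∧ ∃ h, V h = x} with hS0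
  by_contra hnd
  set N := (Submodule.span ℂ S0).topologicalClosure with hNdef
  have hNclosed : IsClosed (N : Set K) := Submodule.isClosed_topologicalClosure _
  haveI : CompleteSpace ↥N := hNclosed.completeSpace_coe
  have hNne : N ≠ ⊤ := by
    intro h
    apply hnd
    rw [dense_iff_closure_eq, ← Submodule.topologicalClosure_coe, ← hNdef, h,
      Submodule.top_coe]
  have hbot : Nᗮ ≠ ⊥ := fun h => hNne ((Submodule.orthogonal_eq_bot_iff).1 h)
  obtain ⟨z, hzN, hz0⟩ := Submodule.exists_mem_ne_zero_of_ne_bot hbot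
  have hspan_inv : ∀ (a : A), ∀ w ∈ Submodule.span ℂ S0, πK a w ∈ Submodule.span ℂ S0 := by
    intro a w hw
    induction hw using Submodule.span_induction with
    | mem x hx =>
      obtain ⟨V, hV, h, rfl⟩ := hx
      exact Submodule.subset_span ⟨V, hV, πH a h, hV a h⟩
    | zero => simpa using Submodule.zero_mem _
    | add x y hx hy ihx ihy => simpa [map_add] using Submodule.add_mem _ ihx ihy
    | smul c x hx ih => simpa [map_smul] using Submodule.smul_mem _ c ih
  have hNinv : ∀ (a : A) (x : K), x ∈ N → πK a x ∈ N := by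
    intro a x hx
    have hx' : x ∈ closure ((Submodule.span ℂ S0 : Submodule ℂ K) : Set K) := by
      rw [← Submodule.topologicalClosure_coe]; exact hx
    have := map_mem_closure (πK a).continuous hx'
      (fun w hw => hspan_inv a w hw)
    rw [← Submodule.topologicalClosure_coe] at this
    exact this
  set πL := compRep πK N hNinv with hπL
  set R : K →L[ℂ] ↥Nᗮ := Submodule.orthogonalProjectionOnto Nᗮ with hR
  have hkills : ∀ w ∈ N, R w = 0 := fun w hw =>
    Submodule.orthogonalProjectionOnto_apply_of_mem_orthogonal
      (N.le_orthogonal_orthogonal hw)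
  have hRmod : IsModuleMap A πK πL R := by
    intro a x
    have hx : (↑(Submodule.orthogonalProjectionOnto N x) : K) + ↑(Submodule.orthogonalProjectionOnto Nᗮ x) = x :=
        N.starProjection_add_starProjection_orthogonal x
    have hsplit : πK a x = πK a ↑(Submodule.orthogonalProjectionOnto N x) + πK a ↑(R x) := by
      rw [← map_add, hx]
    rw [hsplit, map_add, hkills _ (hNinv a _ (SetLike.coe_mem _)), zero_add]
    rfl
  have hR0 : R ≠ 0 := by
    intro h
    apply hz0
    have h1 : R z = (⟨z, hzN⟩ : ↥Nᗮ) :=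
      Submodule.orthogonalProjectionOnto_mem_subspace_eq_self (⟨z, hzN⟩ : ↥Nᗮ)
    rw [h] at h1
    have := congrArg (fun u : ↥Nᗮ => (u : K)) h1
    simpa using this.symm
  have htendL : ∀ w : ↥Nᗮ, Tendsto (fun i => πL (e i) w) l (𝓝 w) := by
    intro w
    rw [tendsto_subtype_rng]
    have hc : Continuous fun v : K => (↑(R v) : K) :=
      continuous_subtype_val.comp R.continuous
    have h1 := (hc.tendsto ↑w).comp (htend ↑w)
    have h2 : R (↑w : K) = w := Submodule.orthogonalProjectionOnto_mem_subspace_eq_self w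
    simp only [Function.comp_def, h2] at h1
    exact h1
  have hrepK : IsHilbertRep A πK := ⟨hcontr, dense_of_tendsto _ htend⟩
  have hrepL : IsHilbertRep A πL := by
    constructor
    · intro a
      refine ContinuousLinearMap.opNorm_le_bound _ (norm_nonneg a) fun w => ?_
      have h1 : ‖πL a w‖ = ‖(↑(R (πK a ↑w)) : K)‖ := rfl
      calc ‖πL a w‖ = ‖R (πK a ↑w)‖ := rfl
        _ ≤ ‖R‖ * ‖πK a ↑w‖ := R.le_opNorm _
        _ ≤ 1 * ‖πK a ↑w‖ :=
            mul_le_mul_of_nonneg_right (Submodule.orthogonalProjectionOnto_norm_le _) (norm_nonneg _)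
        _ = ‖πK a ↑w‖ := one_mul _
        _ ≤ ‖πK a‖ * ‖↑w‖ := (πK a).le_opNorm _
        _ ≤ ‖a‖ * ‖w‖ := mul_le_mul_of_nonneg_right (hcontr a) (norm_nonneg _)
    · exact dense_of_tendsto _ htendL
  obtain ⟨V, hVmod, hVR⟩ := hgen K ↥Nᗮ πK πL hrepK hrepL R hRmod hR0
  apply hVR
  ext h
  have hVh : V h ∈ N :=
    Submodule.le_topologicalClosure _ (Submodule.subset_span ⟨V, hVmod, h, rfl⟩)
  simp [ContinuousLinearMap.comp_apply, hkills _ hVh]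

/-- The simultaneous approximation result: an element of the double commutant can be
simultaneously approximated on finitely many vectors. -/
lemma approx' {πH : A →ₙₐ[ℂ] (H →L[ℂ] H)} (hrep : IsHilbertRep A πH)
    (hgen : IsGenerator A πH)
    {ι : Type} {l : Filter ι} [hl : l.NeBot] {e : ι → A}
    (hnorm : ∀ i, ‖e i‖ ≤ 1) (hcai : ∀ a : A, Tendsto (fun i => e i * a) l (𝓝 a))
    {T : H →L[ℂ] H} (hT : T ∈ Set.centralizer (Set.centralizer (Set.range ⇑πH)))
    {n : Type} [Fintype n] (ξ : PiLp 2 (fun _ : n => H)) {ε : ℝ} (hε : 0 < ε) :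
    ∃ a : A, ‖ampCLM T ξ - ampRep πH n a ξ‖ < ε := by
  classical
  set πK := ampRep πH n with hπK
  have htendK : ∀ z : PiLp 2 (fun _ : n => H),
      Tendsto (fun i => πK (e i) z) l (𝓝 z) := by
    intro z
    let E := PiLp.continuousLinearEquiv 2 ℂ (fun _ : n => H)
    have h1 : Tendsto (fun i => E (πK (e i) z)) l (𝓝 (E z)) := by
      rw [tendsto_pi_nhds]
      intro j
      exact cai_tendsto_rep hnorm hcai πH hrep (z j)
    have h2 := (E.symm.continuous.tendsto (E z)).comp h1
    have h3 : (⇑E.symm ∘ fun i => E (πK (e i) z)) = fun i => πK (e i) z :=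
      funext fun i => E.symm_apply_apply _
    rw [h3, E.symm_apply_apply] at h2
    exact h2
  have hcontrK : ∀ a : A, ‖πK a‖ ≤ ‖a‖ := fun a =>
    (ampCLM_norm_le (πH a)).trans (hrep.1 a)
  set Φ : A →ₗ[ℂ] PiLp 2 (fun _ : n => H) :=
    { toFun := fun a => πK a ξ
      map_add' := fun a b => by
        show πK (a + b) ξ = πK a ξ + πK b ξ
        rw [map_add]; rfl
      map_smul' := fun c a => by
        show πK (c • a) ξ = (RingHom.id ℂ) c • πK a ξ
        rw [map_smul]; rfl } with hΦ
  set M := (LinearMap.range Φ).topologicalClosure with hM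
  have hMclosed : IsClosed (M : Set (PiLp 2 (fun _ : n => H))) :=
    Submodule.isClosed_topologicalClosure _
  haveI : CompleteSpace ↥M := hMclosed.completeSpace_coe
  have hξM : ξ ∈ M := by
    have h1 : ξ ∈ closure ((LinearMap.range Φ : Submodule ℂ _) : Set (PiLp 2 (fun _ : n => H))) :=
      mem_closure_of_tendsto (htendK ξ) (Eventually.of_forall fun i => ⟨e i, rfl⟩)
    rw [← Submodule.topologicalClosure_coe] at h1
    exact h1
  have hMinv : ∀ (a : A) (x : PiLp 2 (fun _ : n => H)), x ∈ M → πK a x ∈ M := by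
    intro a x hx
    have hx' : x ∈ closure ((LinearMap.range Φ : Submodule ℂ _) : Set (PiLp 2 (fun _ : n => H))) := by
      rw [← Submodule.topologicalClosure_coe]; exact hx
    have hmaps : ∀ w ∈ (LinearMap.range Φ : Submodule ℂ _),
        πK a w ∈ (LinearMap.range Φ : Submodule ℂ _) := by
      rintro _ ⟨b, rfl⟩
      refine ⟨a * b, ?_⟩
      show πK (a * b) ξ = πK a (πK b ξ)
      rw [map_mul, ContinuousLinearMap.mul_apply]
    have := map_mem_closure (πK a).continuous hx' (fun w hw => hmaps w hw)
    rw [← Submodule.topologicalClosure_coe] at this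
    exact this
  set πM := subRep πK M hMinv with hπM
  have htendM : ∀ w : ↥M, Tendsto (fun i => πM (e i) w) l (𝓝 w) := by
    intro w
    rw [tendsto_subtype_rng]
    exact htendK ↑w
  have hcontrM : ∀ a : A, ‖πM a‖ ≤ ‖a‖ := by
    intro a
    refine ContinuousLinearMap.opNorm_le_bound _ (norm_nonneg a) fun w => ?_
    calc ‖πM a w‖ = ‖πK a ↑w‖ := rfl
      _ ≤ ‖πK a‖ * ‖↑w‖ := (πK a).le_opNorm _
      _ ≤ ‖a‖ * ‖w‖ := mul_le_mul_of_nonneg_right (hcontrK a) (norm_nonneg _)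
  have hdense := generator_dense hgen πM hcontrM htendM
  have hTinvM : ampCLM T ξ ∈ M := by
    have hmaps : ∀ w ∈ Submodule.span ℂ
        {x : ↥M | ∃ V : H →L[ℂ] ↥M, IsModuleMap A πH πM V ∧ ∃ h, V h = x},
        ampCLM T (↑w : PiLp 2 (fun _ : n => H)) ∈ M := by
      intro w hw
      induction hw using Submodule.span_induction with
      | mem x hx =>
        obtain ⟨V, hV, h, rfl⟩ := hx
        have hW : IsModuleMap A πH πK (M.subtypeL.comp V) := by
          intro a x
          show (↑(V (πH a x)) : PiLp 2 (fun _ : n => H)) = πK a ↑(V x)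
          rw [hV a x]
          rfl
        have hiw := moduleMap_intertwine hT hW h
        have : ampCLM T ((M.subtypeL.comp V) h) = (↑(V (T h)) : PiLp 2 (fun _ : n => H)) := hiw
        rw [show ((M.subtypeL.comp V) h : PiLp 2 (fun _ : n => H)) = (↑(V h) : PiLp 2 (fun _ : n => H)) from rfl] at this
        rw [this]
        exact SetLike.coe_mem _
      | zero => simpa using Submodule.zero_mem M
      | add x y hx hy ihx ihy =>
        have : ampCLM T (↑(x + y) : PiLp 2 (fun _ : n => H))
            = ampCLM T ↑x + ampCLM T ↑y := by
          rw [Submodule.coe_add, map_add]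
        rw [this]
        exact Submodule.add_mem _ ihx ihy
      | smul c x hx ih =>
        have : ampCLM T (↑(c • x) : PiLp 2 (fun _ : n => H))
            = c • ampCLM T ↑x := by
          rw [Submodule.coe_smul, map_smul]
        rw [this]
        exact Submodule.smul_mem _ c ih
    have hξ' : (⟨ξ, hξM⟩ : ↥M) ∈ closure ((Submodule.span ℂ
        {x : ↥M | ∃ V : H →L[ℂ] ↥M, IsModuleMap A πH πM V ∧ ∃ h, V h = x} : Submodule ℂ ↥M) : Set ↥M) :=
      hdense _
    have hcont : Continuous fun u : ↥M => ampCLM T (↑u : PiLp 2 (fun _ : n => H)) :=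
      (ampCLM T).continuous.comp continuous_subtype_val
    have := map_mem_closure hcont hξ' (fun u hu => hmaps u hu)
    rwa [hMclosed.closure_eq] at this
  have hcl : ampCLM T ξ ∈ closure ((LinearMap.range Φ : Submodule ℂ _) : Set (PiLp 2 (fun _ : n => H))) := by
    rw [← Submodule.topologicalClosure_coe]
    exact hTinvM
  rw [Metric.mem_closure_iff] at hcl
  obtain ⟨b, ⟨a, rfl⟩, hab⟩ := hcl ε hε
  refine ⟨a, ?_⟩
  rw [dist_eq_norm] at hab
  exact hab

end DCTAux

/-- **Double commutant theorem for generators.** If `A` is a complex Banach algebra with a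
contractive approximate identity and the Hilbert `A`-module `H` is a generator for the
category of Hilbert `A`-modules, then the double commutant of `πH(A)` in `B(H)` equals
the closure of `πH(A)` in the weak operator topology. -/
theorem generator_double_commutant [CompleteSpace A] (hA : HasCAI A)
    (H : Type) [NormedAddCommGroup H] [InnerProductSpace ℂ H] [CompleteSpace H]
    (πH : A →ₙₐ[ℂ] (H →L[ℂ] H)) (hrep : IsHilbertRep A πH) (hgen : IsGenerator A πH) :
    Set.centralizer (Set.centralizer (Set.range ⇑πH)) = wotClosure (Set.range ⇑πH) := by
  obtain ⟨ι, l, e, hl, hnorm, hcai⟩ := hA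
  haveI := hl
  have hcai' : ∀ a : A, Tendsto (fun i => e i * a) l (nhds a) := fun a => (hcai a).1
  apply Set.Subset.antisymm
  · -- hard direction: double commutant ⊆ WOT closure
    intro T hT
    haveI := Classical.decEq H
    show (ContinuousLinearMapWOT.ofCLM : (H →L[ℂ] H) → (H →WOT[ℂ] H)) T ∈
      closure ((ContinuousLinearMapWOT.ofCLM : (H →L[ℂ] H) → (H →WOT[ℂ] H)) '' Set.range ⇑πH)
    have happrox : ∀ p : Finset H × ℕ, ∃ a : A,
        ∀ x ∈ p.1, ‖T x - πH a x‖ < 1/(p.2+1 : ℝ) := by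
      intro p
      have hεp : (0:ℝ) < 1/(p.2+1 : ℝ) := by positivity
      let ξ : PiLp 2 (fun _ : {x : H // x ∈ p.1} => H) := WithLp.toLp 2 (fun x => (x : H))
      obtain ⟨a, ha⟩ := approx' hrep hgen hnorm hcai' hT ξ hεp
      refine ⟨a, fun x hx => ?_⟩
      calc ‖T x - πH a x‖
          = ‖(ampCLM T ξ - ampRep πH _ a ξ)
              (⟨x, hx⟩ : {x : H // x ∈ p.1})‖ := rfl
        _ ≤ ‖ampCLM T ξ - ampRep πH _ a ξ‖ :=
            piLp_norm_apply_le _ _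
        _ < 1/(p.2+1 : ℝ) := ha
    choose f hf using happrox
    have htend : Tendsto (fun p : Finset H × ℕ => (ContinuousLinearMapWOT.ofCLM : (H →L[ℂ] H) → (H →WOT[ℂ] H)) (πH (f p)))
        atTop (nhds ((ContinuousLinearMapWOT.ofCLM : (H →L[ℂ] H) → (H →WOT[ℂ] H)) T)) := by
      rw [ContinuousLinearMapWOT.tendsto_iff_forall_dual_apply_tendsto]
      intro x y
      have hst : Tendsto (fun p : Finset H × ℕ => πH (f p) x) atTop (nhds (T x)) := by
        rw [Metric.tendsto_nhds]
        intro δ hδ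
        obtain ⟨m, hm⟩ := exists_nat_one_div_lt hδ
        rw [eventually_atTop]
        refine ⟨({x}, m), fun p hp => ?_⟩
        have hx : x ∈ p.1 := hp.1 (Finset.mem_singleton_self x)
        calc dist (πH (f p) x) (T x) = ‖T x - πH (f p) x‖ := by
              rw [dist_eq_norm, norm_sub_rev]
          _ < 1/(p.2+1 : ℝ) := hf p x hx
          _ ≤ 1/(m+1 : ℝ) := by
              have h1 : (m:ℝ)+1 ≤ (p.2:ℝ)+1 := by
                have := hp.2
                exact_mod_cast Nat.succ_le_succ this
              exact one_div_le_one_div_of_le (by positivity) h1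
          _ < δ := hm
      have h2 := (y.continuous.tendsto (T x)).comp hst
      simpa [Function.comp_def, ContinuousLinearMap.toWOT_apply] using h2
    exact mem_closure_of_tendsto htend
      (Eventually.of_forall fun p => ⟨πH (f p), ⟨f p, rfl⟩, rfl⟩)
  · -- easy direction: WOT closure ⊆ double commutant
    intro T hT
    rw [Set.mem_centralizer_iff]
    intro c hc
    have hT' : (ContinuousLinearMapWOT.ofCLM : (H →L[ℂ] H) → (H →WOT[ℂ] H)) T ∈
        closure ((ContinuousLinearMapWOT.ofCLM : (H →L[ℂ] H) → (H →WOT[ℂ] H)) '' Set.range ⇑πH) := hT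
    have key : ∀ (x : H) (y : H →L[ℂ] ℂ), y (T (c x)) = y (c (T x)) := by
      intro x y
      have hcl : IsClosed {D : (H →WOT[ℂ] H) |
          y (D (c x)) = (y.comp c) (D x)} :=
        isClosed_eq (ContinuousLinearMapWOT.continuous_dual_apply (c x) y)
          (ContinuousLinearMapWOT.continuous_dual_apply x (y.comp c))
      have hsub : (ContinuousLinearMapWOT.ofCLM : (H →L[ℂ] H) → (H →WOT[ℂ] H)) '' Set.range ⇑πH ⊆
          {D : (H →WOT[ℂ] H) | y (D (c x)) = (y.comp c) (D x)} := by
        rintro _ ⟨_, ⟨a, rfl⟩, rfl⟩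
        show y (((ContinuousLinearMapWOT.ofCLM : (H →L[ℂ] H) → (H →WOT[ℂ] H)) (πH a)) (c x)) =
          (y.comp c) (((ContinuousLinearMapWOT.ofCLM : (H →L[ℂ] H) → (H →WOT[ℂ] H)) (πH a)) x)
        simp only [ContinuousLinearMap.toWOT_apply, ContinuousLinearMap.comp_apply]
        have h1 := hc (πH a) ⟨a, rfl⟩
        have h2 := congrArg (fun F : H →L[ℂ] H => F x) h1
        simp only [ContinuousLinearMap.mul_apply] at h2
        rw [h2]
      have hmem := closure_minimal hsub hcl hT'
      simpa only [Set.mem_setOf_eq, ContinuousLinearMap.toWOT_apply,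
        ContinuousLinearMap.comp_apply] using hmem
    have hxeq : ∀ x : H, T (c x) = c (T x) := fun x =>
      eq_of_forall_dual (fun g => key x g)
    ext x
    show c (T x) = T (c x)
    exact (hxeq x).symm
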